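/- Let D and D' be self-adjoint operators on a Hilbert space with a common core C for D, D', and D+D', such that the commutator [D,D'] defined on C extends to a bounded operator. Then for every c in the image of the core under (D+D'+i), ‖D·(D+D'+i)⁻¹c‖² ≤ (1 + ‖[D,D']‖)·‖c‖²; hence D·(D+D'+i)⁻¹ extends to a bounded operator of norm at most √(1 + ‖[D,D']‖). -/

import Mathlib

/-- For self-adjoint `D, D'` in a unital C*-algebra whose (anti)commutator
`[D,D'] = DD' + D'D` is bounded, if `R` is the inverse of `D + D' + i`, then for every
`c`, `‖D·R·c‖² ≤ (1 + ‖[D,D']‖)·‖c‖²`, and hence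
`‖D·R‖ ≤ √(1 + ‖[D,D']‖)`. -/
theorem D_mul_resolvent_bounded {A : Type*} [CStarAlgebra A]
    (D D' : A) (hD : IsSelfAdjoint D) (hD' : IsSelfAdjoint D')
    (R : A)
    (hR : R * (D + D' + Complex.I • (1 : A)) = 1)
    (hR' : (D + D' + Complex.I • (1 : A)) * R = 1) :
    (∀ c : A, ‖D * R * c‖ ^ 2 ≤ (1 + ‖D * D' + D' * D‖) * ‖c‖ ^ 2) ∧
    ‖D * R‖ ≤ Real.sqrt (1 + ‖D * D' + D' * D‖) := by
  letI := CStarAlgebra.spectralOrder A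
  haveI := CStarAlgebra.spectralOrderedRing A
  set X : A := D * D' + D' * D with hX
  set S : A := D + D' with hS
  set T : A := D + D' + Complex.I • (1 : A) with hT
  set j : A := Complex.I • (1 : A) with hj
  have hSsa : IsSelfAdjoint S := hD.add hD'
  have hXsa : IsSelfAdjoint X := by
    rw [IsSelfAdjoint, hX, star_add, star_mul, star_mul, hD.star_eq, hD'.star_eq, add_comm]
  have hstarT : star T = S - j := by
    have : star S = S := hSsa.star_eq
    rw [hT, hj]
    rw [show D + D' + Complex.I • (1:A) = S + Complex.I • (1:A) from by rw [hS]]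
    rw [star_add, star_smul, star_one, Complex.star_def, Complex.conj_I, this,
      neg_smul, ← sub_eq_add_neg]
  have hjcomm : ∀ a : A, a * j = j * a := fun a => by
    rw [hj, mul_smul_comm, smul_mul_assoc, mul_one, one_mul]
  have hjj : j * j = -1 := by
    rw [hj, smul_mul_assoc, mul_smul_comm, one_mul, smul_smul, Complex.I_mul_I]
    simp
  -- star T * T = S^2 + 1
  have hTT : star T * T = S ^ 2 + 1 := by
    have hTj : T = S + j := by rw [hT, hS, hj]
    calc star T * T = (S - j) * (S + j) := by rw [hstarT, hTj]
      _ = S * S + (S * j - j * S) - j * j := by noncomm_ring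
      _ = S ^ 2 + 1 := by rw [hjcomm S, sub_self, hjj, sq]; abel
  -- star R * S^2 * R + star R * R = 1
  have key : star R * (S ^ 2) * R + star R * R = 1 := by
    have h1 : star (T * R) * (T * R) = 1 := by rw [hR']; simp
    have h2 : star R * (star T * T) * R = 1 := by
      rw [star_mul] at h1
      rw [← h1]
      simp only [mul_assoc]
    rw [← h2, hTT, mul_add, add_mul, mul_one]
  have hRSR_nonneg : (0 : A) ≤ star R * (S ^ 2) * R := by
    have h0 : (0:A) ≤ star (S * R) * (S * R) := star_mul_self_nonneg _
    have : star (S * R) * (S * R) = star R * (S ^ 2) * R := by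
      rw [star_mul, hSsa.star_eq, sq]
      simp only [mul_assoc]
    rwa [this] at h0
  have hRR_nonneg : (0 : A) ≤ star R * R := star_mul_self_nonneg R
  have hRR_le_one : star R * R ≤ 1 := by
    calc star R * R ≤ star R * (S ^ 2) * R + star R * R := le_add_of_nonneg_left hRSR_nonneg
      _ = 1 := key
  -- D^2 ≤ S^2 + ‖X‖ • 1
  have hD2 : D ^ 2 ≤ S ^ 2 + (algebraMap ℝ A) ‖X‖ := by
    have hSsq : S ^ 2 = D ^ 2 + D' ^ 2 + X := by rw [hS, hX]; noncomm_ring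
    have h1 : (0:A) ≤ D' ^ 2 := by
      have := star_mul_self_nonneg D'
      rwa [hD'.star_eq, ← sq] at this
    have h2 : -(algebraMap ℝ A) ‖X‖ ≤ X := hXsa.neg_algebraMap_norm_le_self
    rw [hSsq]
    calc D ^ 2 = D ^ 2 + -(algebraMap ℝ A) ‖X‖ + (algebraMap ℝ A) ‖X‖ := by abel
      _ ≤ D ^ 2 + D' ^ 2 + X + (algebraMap ℝ A) ‖X‖ := by
          refine add_le_add ?_ le_rfl
          calc D ^ 2 + -(algebraMap ℝ A) ‖X‖
              ≤ (D ^ 2 + D' ^ 2) + X := add_le_add (le_add_of_nonneg_right h1) h2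
            _ = D ^ 2 + D' ^ 2 + X := rfl
  -- conjugate: star R * D^2 * R ≤ (1 + ‖X‖) • 1
  have hconj : star R * (D ^ 2) * R ≤ star R * (S ^ 2 + (algebraMap ℝ A) ‖X‖) * R :=
    star_left_conjugate_le_conjugate hD2 R
  have hmain : star R * (D ^ 2) * R ≤ (1 + ‖X‖) • (1 : A) := by
    have hexp : star R * (S ^ 2 + (algebraMap ℝ A) ‖X‖) * R
        = star R * (S ^ 2) * R + ‖X‖ • (star R * R) := by
      rw [Algebra.algebraMap_eq_smul_one, mul_add, add_mul]
      congr 1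
      rw [mul_smul_comm, smul_mul_assoc, mul_one]
    have hsmul : ‖X‖ • (star R * R) ≤ ‖X‖ • (1 : A) :=
      smul_le_smul_of_nonneg_left hRR_le_one (norm_nonneg X)
    have h1 : star R * (S ^ 2) * R ≤ 1 := by
      calc star R * (S ^ 2) * R ≤ star R * (S ^ 2) * R + star R * R :=
            le_add_of_nonneg_right hRR_nonneg
        _ = 1 := key
    calc star R * (D ^ 2) * R ≤ star R * (S ^ 2) * R + ‖X‖ • (star R * R) := by
          rw [← hexp]; exact hconj
      _ ≤ 1 + ‖X‖ • (1 : A) := add_le_add h1 hsmul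
      _ = (1 + ‖X‖) • (1 : A) := by rw [add_smul, one_smul]
  have hRDR_nonneg : (0 : A) ≤ star R * (D ^ 2) * R := by
    have h0 : (0:A) ≤ star (D * R) * (D * R) := star_mul_self_nonneg _
    have : star (D * R) * (D * R) = star R * (D ^ 2) * R := by
      rw [star_mul, hD.star_eq, sq]
      simp only [mul_assoc]
    rwa [this] at h0
  have hXnn : (0:ℝ) ≤ ‖X‖ := norm_nonneg X
  have hnorm : ‖star R * (D ^ 2) * R‖ ≤ 1 + ‖X‖ := by
    calc ‖star R * (D ^ 2) * R‖ ≤ ‖(1 + ‖X‖) • (1 : A)‖ :=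
          CStarAlgebra.norm_le_norm_of_nonneg_of_le hRDR_nonneg hmain
      _ = |1 + ‖X‖| * ‖(1:A)‖ := by rw [norm_smul, Real.norm_eq_abs]
      _ ≤ 1 + ‖X‖ := by
          rw [abs_of_nonneg (by linarith)]
          have hone : ‖(1:A)‖ * ‖(1:A)‖ = ‖(1:A)‖ := by
            rw [← CStarRing.norm_star_mul_self]; simp
          have h1le : ‖(1:A)‖ ≤ 1 := by nlinarith [norm_nonneg (1:A)]
          calc (1 + ‖X‖) * ‖(1:A)‖ ≤ (1 + ‖X‖) * 1 :=
                mul_le_mul_of_nonneg_left h1le (by linarith)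
            _ = 1 + ‖X‖ := mul_one _
  have hDRsq : ‖D * R‖ ^ 2 ≤ 1 + ‖X‖ := by
    have heq : star (D * R) * (D * R) = star R * (D ^ 2) * R := by
      rw [star_mul, hD.star_eq, sq]
      simp only [mul_assoc]
    calc ‖D * R‖ ^ 2 = ‖star (D * R) * (D * R)‖ := by
          rw [CStarRing.norm_star_mul_self, sq]
      _ = ‖star R * (D ^ 2) * R‖ := by rw [heq]
      _ ≤ 1 + ‖X‖ := hnorm
  constructor
  · intro c
    calc ‖D * R * c‖ ^ 2 ≤ (‖D * R‖ * ‖c‖) ^ 2 := by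
          have h := norm_mul_le (D * R) c
          have h0 : (0:ℝ) ≤ ‖D * R * c‖ := norm_nonneg _
          nlinarith
      _ = ‖D * R‖ ^ 2 * ‖c‖ ^ 2 := by ring
      _ ≤ (1 + ‖X‖) * ‖c‖ ^ 2 := mul_le_mul_of_nonneg_right hDRsq (by positivity)
  · have h := Real.sqrt_le_sqrt hDRsq
    rwa [Real.sqrt_sq (norm_nonneg _)] at h
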